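/- arXiv:2512.13992 — 2 statements merged into one kernel-verified Lean document; each statement's English description precedes it below -/
import Mathlib

section
/- Risk transfer under independent variance estimation: Let Y_1,...,Y_p be independent with Y_i ~ N(θ_i, λ) for λ > 0, set V_i = θ_i², and let V̂ = (V̂_1,...,V̂_p) be a random vector with nonnegative coordinates, independent of Y. Define θ̂_i = g_λ(V̂_i)·Y_i and θ_i^or = g_λ(V_i)·Y_i, where g_λ(x) = x/(x+λ). Then E‖θ̂ - θ^or‖² ≤ Σ_{i=1}^p E[(V̂_i - V_i)²/(V_i + λ)]. -/
open MeasureTheory ProbabilityTheory Real Filter Set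
open scoped NNReal ENNReal

section Helpers

lemma int_x_exp {b : ℝ} (hb : 0 < b) : ∫ x : ℝ, x * rexp (-b * x ^ 2) = 0 := by
  have hderiv : ∀ x : ℝ, HasDerivAt (fun x : ℝ => -(2*b)⁻¹ * rexp (-b * x ^ 2))
      (x * rexp (-b * x ^ 2)) x := by
    intro x
    have h := (((hasDerivAt_pow 2 x).const_mul (-b)).exp).const_mul (-(2*b)⁻¹)
    refine h.congr_deriv ?_
    field_simp
    ring
  have hint : Integrable (fun x : ℝ => x * rexp (-b * x ^ 2)) := integrable_mul_exp_neg_mul_sq hb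
  have hF : Integrable (fun x : ℝ => -(2*b)⁻¹ * rexp (-b * x ^ 2)) :=
    (integrable_exp_neg_mul_sq hb).const_mul _
  exact integral_eq_zero_of_hasDerivAt_of_integrable hderiv hint hF

lemma integrable_sq_exp {b : ℝ} (hb : 0 < b) :
    Integrable (fun x : ℝ => x ^ 2 * rexp (-b * x ^ 2)) := by
  have := integrable_rpow_mul_exp_neg_mul_sq hb (show (-1:ℝ) < 2 by norm_num)
  simpa [Real.rpow_natCast] using this

lemma int_sq_exp {b : ℝ} (hb : 0 < b) :
    ∫ x : ℝ, x ^ 2 * rexp (-b * x ^ 2) = (2*b)⁻¹ * Real.sqrt (π / b) := by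
  have hb2 : (2*b) ≠ 0 := by positivity
  have hderiv : ∀ x : ℝ, HasDerivAt (fun x : ℝ => -(2*b)⁻¹ * (x * rexp (-b * x ^ 2)))
      (x ^ 2 * rexp (-b * x ^ 2) - (2*b)⁻¹ * rexp (-b * x ^ 2)) x := by
    intro x
    have h1 : HasDerivAt (fun x : ℝ => x * rexp (-b * x ^ 2))
        (rexp (-b * x ^ 2) + x * (rexp (-b * x ^ 2) * (-b * (2 * x)))) x := by
      have := (hasDerivAt_id x).mul (((hasDerivAt_pow 2 x).const_mul (-b)).exp)
      refine this.congr_deriv ?_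
      simp [pow_one]
    have h := h1.const_mul (-(2*b)⁻¹)
    refine h.congr_deriv ?_
    field_simp
    ring
  have hf' : Integrable (fun x : ℝ =>
      x ^ 2 * rexp (-b * x ^ 2) - (2*b)⁻¹ * rexp (-b * x ^ 2)) :=
    (integrable_sq_exp hb).sub ((integrable_exp_neg_mul_sq hb).const_mul _)
  have hF : Integrable (fun x : ℝ => -(2*b)⁻¹ * (x * rexp (-b * x ^ 2))) :=
    (integrable_mul_exp_neg_mul_sq hb).const_mul _
  have h0 := integral_eq_zero_of_hasDerivAt_of_integrable hderiv hf' hF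
  rw [integral_sub (integrable_sq_exp hb) ((integrable_exp_neg_mul_sq hb).const_mul _),
    sub_eq_zero] at h0
  rw [h0, MeasureTheory.integral_const_mul, integral_gaussian]

section Gauss
variable (m : ℝ) {v : ℝ≥0}

lemma gauss_sq_aux (hv : v ≠ 0) :
    (Integrable (fun x : ℝ => x ^ 2 * gaussianPDFReal m v x)) ∧
    ∫ x : ℝ, x ^ 2 * gaussianPDFReal m v x = m ^ 2 + v := by
  have hvpos : 0 < (v : ℝ) := by positivity
  set b : ℝ := (2 * (v : ℝ))⁻¹ with hbdef
  have hb : 0 < b := by positivity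
  set c : ℝ := (Real.sqrt (2 * π * (v : ℝ)))⁻¹ with hcdef
  have hpdf : ∀ x, gaussianPDFReal m v x = c * rexp (-b * (x - m) ^ 2) := by
    intro x
    rw [gaussianPDFReal]
    congr 1
    rw [hbdef]
    field_simp
  set g : ℝ → ℝ := fun u => c * (u ^ 2 * rexp (-b * u ^ 2))
      + ((2 * m * c) * (u * rexp (-b * u ^ 2)) + (m ^ 2 * c) * rexp (-b * u ^ 2)) with hgdef
  have i1 : Integrable (fun u : ℝ => c * (u ^ 2 * rexp (-b * u ^ 2))) :=
    (integrable_sq_exp hb).const_mul c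
  have i2 : Integrable (fun u : ℝ => (2 * m * c) * (u * rexp (-b * u ^ 2))) :=
    (integrable_mul_exp_neg_mul_sq hb).const_mul _
  have i3 : Integrable (fun u : ℝ => (m ^ 2 * c) * rexp (-b * u ^ 2)) :=
    (integrable_exp_neg_mul_sq hb).const_mul _
  have i23 : Integrable (fun u : ℝ => (2 * m * c) * (u * rexp (-b * u ^ 2))
      + (m ^ 2 * c) * rexp (-b * u ^ 2)) := i2.add i3
  have hg_int : Integrable g := i1.add i23
  have hform : (fun x : ℝ => x ^ 2 * gaussianPDFReal m v x) = fun x => g (x - m) := by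
    funext x
    rw [hpdf, hgdef]
    simp only [sub_add_cancel]
    ring
  constructor
  · rw [hform]; exact hg_int.comp_sub_right m
  rw [hform, integral_sub_right_eq_self g m]
  simp only [hgdef]
  rw [integral_add i1 i23, integral_add i2 i3, MeasureTheory.integral_const_mul,
    MeasureTheory.integral_const_mul, MeasureTheory.integral_const_mul, int_sq_exp hb,
    int_x_exp hb, integral_gaussian]
  have hsq : Real.sqrt (π / b) = Real.sqrt (2 * π * (v : ℝ)) := by
    congr 1
    rw [hbdef]
    field_simp
  have hcpos : 0 < Real.sqrt (2 * π * (v : ℝ)) := Real.sqrt_pos.mpr (by positivity)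
  have h2b : (2 * b)⁻¹ = (v : ℝ) := by
    rw [hbdef]
    field_simp
  rw [hsq, h2b, hcdef]
  field_simp
  ring

lemma lintegral_sq_gaussianReal (hv : v ≠ 0) :
    ∫⁻ x, ENNReal.ofReal (x ^ 2) ∂(gaussianReal m v) = ENNReal.ofReal (m ^ 2 + v) := by
  obtain ⟨hint, hval⟩ := gauss_sq_aux m hv
  rw [gaussianReal_of_var_ne_zero _ hv,
    lintegral_withDensity_eq_lintegral_mul _ (measurable_gaussianPDF _ _)
      (by measurability)]
  have : (fun x => (gaussianPDF m v * fun x => ENNReal.ofReal (x ^ 2)) x)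
      = fun x => ENNReal.ofReal (x ^ 2 * gaussianPDFReal m v x) := by
    funext x
    simp only [Pi.mul_apply, gaussianPDF]
    rw [← ENNReal.ofReal_mul (gaussianPDFReal_nonneg _ _ _), mul_comm]
  rw [this, ← ofReal_integral_eq_lintegral_ofReal hint
    (ae_of_all _ fun x => mul_nonneg (sq_nonneg _) (gaussianPDFReal_nonneg _ _ _)), hval]

end Gauss

lemma key_ineq {lam a b : ℝ} (hlam : 0 < lam) (ha : 0 ≤ a) (hb : 0 ≤ b) :
    (a / (a + lam) - b / (b + lam)) ^ 2 * (b + lam) ≤ (a - b) ^ 2 / (b + lam) := by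
  have h1 : 0 < a + lam := by linarith
  have h2 : 0 < b + lam := by linarith
  have hdiff : a / (a + lam) - b / (b + lam) = lam * (a - b) / ((a + lam) * (b + lam)) := by
    field_simp
    ring
  rw [hdiff, div_pow, div_mul_eq_mul_div, div_le_div_iff₀ (by positivity) h2]
  have hl : lam ^ 2 ≤ (a + lam) ^ 2 := by nlinarith
  have hnn : 0 ≤ (a - b) ^ 2 * (b + lam) ^ 2 := by positivity
  nlinarith [mul_le_mul_of_nonneg_left hl hnn]

end Helpers

/-- Risk transfer under independent variance estimation: if `Y_i ~ N(θ_i, λ)` are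
independent, `V_i = θ_i²`, and `V̂` is a nonnegative random vector independent of `Y`,
then with `g_λ(x) = x/(x+λ)`, `θ̂_i = g_λ(V̂_i) Y_i`, `θ_i^or = g_λ(V_i) Y_i`, we have
`E‖θ̂ - θ^or‖² ≤ Σ_i E[(V̂_i - V_i)²/(V_i + λ)]`. -/
theorem risk_transfer_independent_variance
    {Ω : Type*} [MeasurableSpace Ω] (μ : Measure Ω) [IsProbabilityMeasure μ]
    (p : ℕ) (lam : ℝ) (hlam : 0 < lam) (θ : Fin p → ℝ)
    (Y Vhat : Ω → Fin p → ℝ)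
    (hYmeas : Measurable Y) (hVmeas : Measurable Vhat)
    (hYlaw : ∀ i : Fin p,
      Measure.map (fun ω => Y ω i) μ = gaussianReal (θ i) lam.toNNReal)
    (hYindep : iIndepFun
      (fun i ω => Y ω i) μ)
    (hVnonneg : ∀ ω i, 0 ≤ Vhat ω i)
    (hindep : IndepFun Vhat Y μ) :
    ∫⁻ ω, ENNReal.ofReal
        (∑ i, (Vhat ω i / (Vhat ω i + lam) * Y ω i
              - θ i ^ 2 / (θ i ^ 2 + lam) * Y ω i) ^ 2) ∂μ
      ≤ ∑ i, ∫⁻ ω, ENNReal.ofReal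
          ((Vhat ω i - θ i ^ 2) ^ 2 / (θ i ^ 2 + lam)) ∂μ := by
  have hlamNN : ((lam.toNNReal : ℝ≥0) : ℝ) = lam := Real.coe_toNNReal _ hlam.le
  have hvne : lam.toNNReal ≠ 0 := by
    simp only [ne_eq, Real.toNNReal_eq_zero, not_le]
    exact hlam
  have hYi : ∀ i, Measurable (fun ω => Y ω i) :=
    fun i => (measurable_pi_apply i).comp hYmeas
  have hVi : ∀ i, Measurable (fun ω => Vhat ω i) :=
    fun i => (measurable_pi_apply i).comp hVmeas
  have hterm_meas : ∀ i : Fin p, Measurable (fun ω =>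
      ENNReal.ofReal ((Vhat ω i / (Vhat ω i + lam) * Y ω i
        - θ i ^ 2 / (θ i ^ 2 + lam) * Y ω i) ^ 2)) := by
    intro i
    exact ((((hVi i).div ((hVi i).add_const lam)).mul (hYi i)).sub
      ((hYi i).const_mul _)).pow_const 2 |>.ennreal_ofReal
  calc ∫⁻ ω, ENNReal.ofReal (∑ i, (Vhat ω i / (Vhat ω i + lam) * Y ω i
          - θ i ^ 2 / (θ i ^ 2 + lam) * Y ω i) ^ 2) ∂μ
      = ∑ i, ∫⁻ ω, ENNReal.ofReal ((Vhat ω i / (Vhat ω i + lam) * Y ω i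
          - θ i ^ 2 / (θ i ^ 2 + lam) * Y ω i) ^ 2) ∂μ := by
        simp_rw [ENNReal.ofReal_sum_of_nonneg (fun i _ => sq_nonneg _)]
        exact lintegral_finset_sum _ (fun i _ => hterm_meas i)
    _ ≤ ∑ i, ∫⁻ ω, ENNReal.ofReal ((Vhat ω i - θ i ^ 2) ^ 2 / (θ i ^ 2 + lam)) ∂μ := by
        refine Finset.sum_le_sum fun i _ => ?_
        set c : ℝ := θ i ^ 2 with hc
        have hcnn : 0 ≤ c := sq_nonneg _
        set φ : ℝ → ℝ≥0∞ := fun x => ENNReal.ofReal ((x / (x + lam) - c / (c + lam)) ^ 2)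
          with hφ
        set ψ : ℝ → ℝ≥0∞ := fun y => ENNReal.ofReal (y ^ 2) with hψ
        have hφm : Measurable φ :=
          (((measurable_id.div (measurable_id.add_const lam)).sub_const _).pow_const 2
            ).ennreal_ofReal
        have hψm : Measurable ψ := (measurable_id.pow_const 2).ennreal_ofReal
        have hrw : ∀ ω, ENNReal.ofReal ((Vhat ω i / (Vhat ω i + lam) * Y ω i
            - c / (c + lam) * Y ω i) ^ 2) = φ (Vhat ω i) * ψ (Y ω i) := by
          intro ω
          rw [hφ, hψ, ← ENNReal.ofReal_mul (sq_nonneg _)]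
          congr 1
          ring
        simp_rw [hrw]
        have hindep' : IndepFun (fun ω => φ (Vhat ω i)) (fun ω => ψ (Y ω i)) μ :=
          hindep.comp (hφm.comp (measurable_pi_apply i)) (hψm.comp (measurable_pi_apply i))
        have hmul : ∫⁻ ω, φ (Vhat ω i) * ψ (Y ω i) ∂μ
            = (∫⁻ ω, φ (Vhat ω i) ∂μ) * ∫⁻ ω, ψ (Y ω i) ∂μ :=
          lintegral_mul_eq_lintegral_mul_lintegral_of_indepFun
            (hφm.comp (hVi i)) (hψm.comp (hYi i)) hindep'
        rw [hmul]
        have hY2 : ∫⁻ ω, ψ (Y ω i) ∂μ = ENNReal.ofReal (c + lam) := by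
          rw [hψ]
          have := lintegral_map (μ := μ) (g := fun ω => Y ω i)
            (f := fun y : ℝ => ENNReal.ofReal (y ^ 2))
            ((measurable_id.pow_const 2).ennreal_ofReal) (hYi i)
          rw [← this, hYlaw i, lintegral_sq_gaussianReal _ hvne, hlamNN, hc]
        rw [hY2, ← lintegral_mul_const _ (show Measurable fun ω => φ (Vhat ω i) from hφm.comp (hVi i))]
        refine lintegral_mono fun ω => ?_
        rw [hφ, ← ENNReal.ofReal_mul (sq_nonneg _)]
        exact ENNReal.ofReal_le_ofReal (key_ineq hlam (hVnonneg ω i) hcnn)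
end

section
/- Minimax lower bound via Assouad's construction: in the Gaussian sequence model Y_i = θ_i + ε_i with ε_i i.i.d. N(0, λ), λ = σ²/n ≤ R, for any estimator θ̃ (measurable function of Y), sup over θ in the ordered sparse class Θ↓(s,R) of E_θ‖θ̃ - θ‖² is at least c·s·λ, where c = Φ(-1)/2 and Φ is the standard normal CDF. -/
open MeasureTheory ProbabilityTheory

/-- The ordered sparse class `Θ↓(s,R)`. -/
def orderedSparseClass (p s : ℕ) (R : ℝ) : Set (Fin p → ℝ) :=
  {θ | ∃ k ≤ s,
    (∀ i j : Fin p, i ≤ j → j.val < k → θ j ^ 2 ≤ θ i ^ 2) ∧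
    (∀ i : Fin p, θ i ^ 2 ≤ R) ∧
    (∀ i : Fin p, k ≤ i.val → θ i = 0)}

/-- The standard normal CDF. -/
noncomputable def stdNormalCDF (x : ℝ) : ℝ :=
  (gaussianReal 0 1 (Set.Iic x)).toReal

open scoped ENNReal NNReal

lemma stdNormalCDF_neg_one_nonneg : 0 ≤ stdNormalCDF (-1) := ENNReal.toReal_nonneg

lemma gauss_Iic_zero {lam : ℝ} (hlam : 0 < lam) :
    gaussianReal (Real.sqrt lam) lam.toNNReal (Set.Iic 0)
      = ENNReal.ofReal (stdNormalCDF (-1)) := by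
  set a := Real.sqrt lam with ha
  have ha0 : 0 < a := Real.sqrt_pos.2 hlam
  have hv : (⟨a ^ 2, sq_nonneg _⟩ : NNReal) * 1 = lam.toNNReal := by
    ext
    simp [Real.sq_sqrt hlam.le, hlam.le, ha]
  have h1 : gaussianReal a lam.toNNReal = (gaussianReal 0 lam.toNNReal).map (· + a) := by
    rw [gaussianReal_map_add_const, zero_add]
  have h2 : gaussianReal (0 : ℝ) lam.toNNReal = (gaussianReal 0 1).map (a * ·) := by
    rw [gaussianReal_map_const_mul, mul_zero]
    congr 1
    exact hv.symm
  rw [h1, Measure.map_apply (measurable_add_const a) measurableSet_Iic]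
  have hpre1 : ((· + a) ⁻¹' Set.Iic 0 : Set ℝ) = Set.Iic (-a) := by
    ext x
    simp only [Set.mem_preimage, Set.mem_Iic]
    constructor <;> intro h <;> linarith
  rw [hpre1, h2, Measure.map_apply (measurable_const_mul a) measurableSet_Iic]
  have hpre2 : ((a * ·) ⁻¹' Set.Iic (-a) : Set ℝ) = Set.Iic (-1) := by
    ext x
    simp only [Set.mem_preimage, Set.mem_Iic]
    constructor <;> intro h <;> nlinarith
  rw [hpre2, stdNormalCDF, ENNReal.ofReal_toReal (measure_ne_top _ _)]

lemma gauss_restrict_le {lam : ℝ} (hlam : 0 < lam) :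
    (gaussianReal (Real.sqrt lam) lam.toNNReal).restrict (Set.Iic 0)
      ≤ (gaussianReal (-Real.sqrt lam) lam.toNNReal).restrict (Set.Iic 0) := by
  have hv : lam.toNNReal ≠ 0 := by
    simp [Real.toNNReal_eq_zero, not_le, hlam]
  refine Measure.le_iff.2 fun t ht => ?_
  rw [Measure.restrict_apply ht, Measure.restrict_apply ht,
    gaussianReal_apply _ hv, gaussianReal_apply _ hv]
  refine setLIntegral_mono (measurable_gaussianPDF _ _) fun x hx => ?_
  have hx0 : x ≤ 0 := hx.2
  have ha0 : 0 ≤ Real.sqrt lam := Real.sqrt_nonneg lam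
  rw [gaussianPDF]
  apply ENNReal.ofReal_le_ofReal
  rw [gaussianPDFReal, gaussianPDFReal]
  have hden : (0 : ℝ) < 2 * lam.toNNReal := by
    have : (0 : ℝ) < lam.toNNReal := by
      simpa using hlam
    linarith
  refine mul_le_mul_of_nonneg_left ?_ (by positivity)
  refine Real.exp_le_exp.2 ?_
  rw [div_le_div_iff_of_pos_right hden]
  nlinarith [mul_nonneg ha0 (neg_nonneg.2 hx0)]

lemma one_dim_core {lam : ℝ} (hlam : 0 < lam) (GP GM : ℝ → ℝ≥0∞) (hGP : Measurable GP)
    (hG : ∀ t, ENNReal.ofReal (2 * lam) ≤ GP t + GM t) :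
    ENNReal.ofReal (2 * lam) * ENNReal.ofReal (stdNormalCDF (-1))
      ≤ (∫⁻ t, GP t ∂gaussianReal (Real.sqrt lam) lam.toNNReal)
        + ∫⁻ t, GM t ∂gaussianReal (-Real.sqrt lam) lam.toNNReal := by
  have h1 : ∫⁻ t in Set.Iic 0, GP t ∂gaussianReal (Real.sqrt lam) lam.toNNReal
      ≤ ∫⁻ t, GP t ∂gaussianReal (Real.sqrt lam) lam.toNNReal :=
    setLIntegral_le_lintegral _ _
  have h2 : ∫⁻ t in Set.Iic 0, GM t ∂gaussianReal (Real.sqrt lam) lam.toNNReal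
      ≤ ∫⁻ t, GM t ∂gaussianReal (-Real.sqrt lam) lam.toNNReal :=
    le_trans (lintegral_mono' (gauss_restrict_le hlam) le_rfl)
      (setLIntegral_le_lintegral _ _)
  calc ENNReal.ofReal (2 * lam) * ENNReal.ofReal (stdNormalCDF (-1))
      = ∫⁻ _ in Set.Iic 0, ENNReal.ofReal (2 * lam)
          ∂gaussianReal (Real.sqrt lam) lam.toNNReal := by
        rw [setLIntegral_const, gauss_Iic_zero hlam]
    _ ≤ ∫⁻ t in Set.Iic 0, (GP t + GM t)
          ∂gaussianReal (Real.sqrt lam) lam.toNNReal := lintegral_mono fun t => hG t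
    _ = (∫⁻ t in Set.Iic 0, GP t ∂gaussianReal (Real.sqrt lam) lam.toNNReal)
          + ∫⁻ t in Set.Iic 0, GM t ∂gaussianReal (Real.sqrt lam) lam.toNNReal :=
        lintegral_add_left hGP _
    _ ≤ _ := add_le_add h1 h2

lemma lmarginal_congr_measure {δ : Type*} [DecidableEq δ] {π : δ → Type*}
    [∀ i, MeasurableSpace (π i)] (μ ν : ∀ i, Measure (π i)) (s : Finset δ)
    (h : ∀ j ∈ s, μ j = ν j) (f : (∀ i, π i) → ℝ≥0∞) :
    (∫⋯∫⁻_s, f ∂μ) = ∫⋯∫⁻_s, f ∂ν := by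
  have hh : (fun j : s => μ j) = fun j : s => ν j := funext fun j => h j j.2
  ext x
  unfold MeasureTheory.lmarginal
  rw [hh]

lemma pair_bound {lam : ℝ} (hlam : 0 < lam) (p : ℕ)
    (f : (Fin p → ℝ) → ℝ) (hf : Measurable f) (i : Fin p)
    (mP mM : Fin p → ℝ) (hmiP : mP i = Real.sqrt lam) (hmiM : mM i = -Real.sqrt lam)
    (hm : ∀ j, j ≠ i → mP j = mM j) :
    ENNReal.ofReal (2 * lam) * ENNReal.ofReal (stdNormalCDF (-1))
      ≤ (∫⁻ y, ENNReal.ofReal ((f y - Real.sqrt lam) ^ 2)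
            ∂Measure.pi (fun j => gaussianReal (mP j) lam.toNNReal))
        + ∫⁻ y, ENNReal.ofReal ((f y + Real.sqrt lam) ^ 2)
            ∂Measure.pi (fun j => gaussianReal (mM j) lam.toNNReal) := by
  classical
  set a := Real.sqrt lam with ha
  set FP : (Fin p → ℝ) → ℝ≥0∞ := fun y => ENNReal.ofReal ((f y - a) ^ 2) with hFp
  set FM : (Fin p → ℝ) → ℝ≥0∞ := fun y => ENNReal.ofReal ((f y + a) ^ 2) with hFm
  have hFP : Measurable FP := ((hf.sub measurable_const).pow_const 2).ennreal_ofReal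
  have hFM : Measurable FM := ((hf.add measurable_const).pow_const 2).ennreal_ofReal
  have x₀ : Fin p → ℝ := fun _ => 0
  rw [lintegral_eq_lmarginal_univ (μ := fun j => gaussianReal (mP j) lam.toNNReal) x₀,
    lintegral_eq_lmarginal_univ (μ := fun j => gaussianReal (mM j) lam.toNNReal) x₀,
    lmarginal_erase _ hFP (Finset.mem_univ i) x₀,
    lmarginal_erase _ hFM (Finset.mem_univ i) x₀]
  have hfam : (∫⋯∫⁻_(Finset.univ.erase i), FM ∂(fun j => gaussianReal (mM j) lam.toNNReal))
      = ∫⋯∫⁻_(Finset.univ.erase i), FM ∂(fun j => gaussianReal (mP j) lam.toNNReal) :=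
    lmarginal_congr_measure _ _ _
      (fun j hj => by rw [hm j (Finset.ne_of_mem_erase hj)]) _
  rw [hfam, hmiP, hmiM]
  have key : ∀ z : Fin p → ℝ, ENNReal.ofReal (2 * lam) ≤ FP z + FM z := by
    intro z
    calc ENNReal.ofReal (2 * lam)
        ≤ ENNReal.ofReal ((f z - a) ^ 2 + (f z + a) ^ 2) := by
          refine ENNReal.ofReal_le_ofReal ?_
          nlinarith [Real.sq_sqrt hlam.le, sq_nonneg (f z)]
      _ ≤ FP z + FM z := ENNReal.ofReal_add_le
  refine one_dim_core hlam _ _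
    ((Measurable.lmarginal _ hFP).comp (measurable_update x₀)) fun t => ?_
  unfold MeasureTheory.lmarginal
  refine le_trans (le_of_eq ?_) (le_trans (lintegral_mono fun y => key _)
    (le_of_eq (lintegral_add_left (hFP.comp measurable_updateFinset) _)))
  rw [lintegral_const, measure_univ, mul_one]

noncomputable def vtx (s : ℕ) (aa : ℝ) {p : ℕ} (τ : Fin p → Bool) : Fin p → ℝ :=
  fun j => if (j : ℕ) < s then (if τ j then aa else -aa) else 0

lemma vtx_lt {s p : ℕ} (aa : ℝ) (τ : Fin p → Bool) {j : Fin p} (h : (j : ℕ) < s) :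
    vtx s aa τ j = if τ j then aa else -aa := if_pos h

lemma vtx_ge {s p : ℕ} (aa : ℝ) (τ : Fin p → Bool) {j : Fin p} (h : s ≤ (j : ℕ)) :
    vtx s aa τ j = 0 := if_neg (not_lt.2 h)

lemma vtx_sq {s p : ℕ} (aa : ℝ) (τ : Fin p → Bool) {j : Fin p} (h : (j : ℕ) < s) :
    vtx s aa τ j ^ 2 = aa ^ 2 := by
  rw [vtx_lt aa τ h]
  cases τ j
  · simp [neg_sq]
  · simp

lemma vtx_mem {p s : ℕ} {lam R : ℝ} (hlam : 0 < lam) (hlamR : lam ≤ R)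
    (τ : Fin p → Bool) : vtx s (Real.sqrt lam) τ ∈ orderedSparseClass p s R := by
  have ha2 : Real.sqrt lam ^ 2 = lam := Real.sq_sqrt hlam.le
  refine ⟨s, le_rfl, ?_, ?_, ?_⟩
  · intro i j hij hjs
    rw [vtx_sq _ _ hjs, vtx_sq _ _ (lt_of_le_of_lt hij hjs)]
  · intro i
    by_cases hi : (i : ℕ) < s
    · rw [vtx_sq _ _ hi, ha2]; exact hlamR
    · rw [vtx_ge _ _ (not_lt.1 hi)]
      norm_num
      linarith
  · intro i hi
    exact vtx_ge _ _ hi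

/-- Minimax lower bound via Assouad's construction: in the Gaussian sequence model
with noise variance `λ = σ²/n ≤ R`, every estimator `θ̃` has worst-case risk over
`Θ↓(s,R)` at least `c·s·λ` with `c = Φ(-1)/2`. -/
theorem minimax_lower_bound_ordered_sparse
    (p s : ℕ) (hs : 1 ≤ s) (hsp : s ≤ p)
    (lam R : ℝ) (hlam : 0 < lam) (hlamR : lam ≤ R)
    (est : (Fin p → ℝ) → Fin p → ℝ) (hest : Measurable est) :
    ENNReal.ofReal (stdNormalCDF (-1) / 2 * s * lam)
      ≤ ⨆ (θ : Fin p → ℝ) (_ : θ ∈ orderedSparseClass p s R),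
          ∫⁻ y, ENNReal.ofReal (∑ i, (est y i - θ i) ^ 2)
            ∂(Measure.pi fun i => gaussianReal (θ i) lam.toNNReal) := by
  classical
  have hΦ : 0 ≤ stdNormalCDF (-1) := stdNormalCDF_neg_one_nonneg
  -- per-vertex risk is below the sup
  have hriskT : ∀ τ : Fin p → Bool,
      (∫⁻ y, ENNReal.ofReal (∑ i, (est y i - vtx s (Real.sqrt lam) τ i) ^ 2)
          ∂(Measure.pi fun j => gaussianReal (vtx s (Real.sqrt lam) τ j) lam.toNNReal))
        ≤ ⨆ (θ : Fin p → ℝ) (_ : θ ∈ orderedSparseClass p s R),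
            ∫⁻ y, ENNReal.ofReal (∑ i, (est y i - θ i) ^ 2)
              ∂(Measure.pi fun i => gaussianReal (θ i) lam.toNNReal) := by
    intro τ
    exact le_iSup₂ (f := fun θ (_ : θ ∈ orderedSparseClass p s R) =>
      ∫⁻ y, ENNReal.ofReal (∑ i, (est y i - θ i) ^ 2)
        ∂(Measure.pi fun i => gaussianReal (θ i) lam.toNNReal))
      (vtx s (Real.sqrt lam) τ) (vtx_mem hlam hlamR τ)
  set S : Finset (Fin p) := Finset.univ.filter (fun j : Fin p => (j : ℕ) < s) with hS
  have hScard : S.card = s := by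
    have himg : S = Finset.image (Fin.castLE hsp) Finset.univ := by
      rw [hS]
      ext j
      simp only [Finset.mem_filter, Finset.mem_univ, true_and, Finset.mem_image]
      constructor
      · intro hj
        exact ⟨⟨(j : ℕ), hj⟩, by ext; rfl⟩
      · rintro ⟨k, rfl⟩
        simpa using k.isLt
    rw [himg, Finset.card_image_of_injective _ (Fin.castLE_injective hsp),
      Finset.card_univ, Fintype.card_fin]
  -- per-coordinate risks sum below the risk
  have hstep1 : ∀ τ : Fin p → Bool,
      ∑ i ∈ S, ∫⁻ y, ENNReal.ofReal ((est y i - vtx s (Real.sqrt lam) τ i) ^ 2)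
          ∂(Measure.pi fun j => gaussianReal (vtx s (Real.sqrt lam) τ j) lam.toNNReal)
        ≤ ∫⁻ y, ENNReal.ofReal (∑ i, (est y i - vtx s (Real.sqrt lam) τ i) ^ 2)
            ∂(Measure.pi fun j => gaussianReal (vtx s (Real.sqrt lam) τ j) lam.toNNReal) := by
    intro τ
    have hmeas : ∀ i ∈ S,
        Measurable fun y => ENNReal.ofReal ((est y i - vtx s (Real.sqrt lam) τ i) ^ 2) :=
      fun i _ =>
        ((((measurable_pi_apply i).comp hest).sub measurable_const).pow_const 2).ennreal_ofReal
    rw [← lintegral_finset_sum S hmeas]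
    refine lintegral_mono fun y => ?_
    rw [ENNReal.ofReal_sum_of_nonneg (fun i _ => sq_nonneg _)]
    exact Finset.sum_le_sum_of_subset (Finset.subset_univ S)
  -- pairing bound
  have hpair : ∀ i ∈ S, ∀ τ : Fin p → Bool,
      ENNReal.ofReal (2 * lam) * ENNReal.ofReal (stdNormalCDF (-1))
        ≤ (∫⁻ y, ENNReal.ofReal ((est y i - vtx s (Real.sqrt lam) τ i) ^ 2)
              ∂(Measure.pi fun j => gaussianReal (vtx s (Real.sqrt lam) τ j) lam.toNNReal))
          + ∫⁻ y, ENNReal.ofReal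
              ((est y i - vtx s (Real.sqrt lam) (Function.update τ i (!τ i)) i) ^ 2)
              ∂(Measure.pi fun j =>
                gaussianReal (vtx s (Real.sqrt lam) (Function.update τ i (!τ i)) j)
                  lam.toNNReal) := by
    intro i hiS τ
    have his : (i : ℕ) < s := by
      have := hiS; rw [hS] at this
      exact (Finset.mem_filter.1 this).2
    have hne : ∀ j, j ≠ i →
        vtx s (Real.sqrt lam) τ j = vtx s (Real.sqrt lam) (Function.update τ i (!τ i)) j := by
      intro j hj
      unfold vtx
      rw [Function.update_of_ne hj]
    rcases (Bool.eq_false_or_eq_true (τ i)).symm with hb | hb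
    · -- τ i = false
      have h1 : vtx s (Real.sqrt lam) (Function.update τ i (!τ i)) i = Real.sqrt lam := by
        rw [vtx_lt _ _ his, Function.update_self, hb]
        simp
      have h2 : vtx s (Real.sqrt lam) τ i = -Real.sqrt lam := by
        rw [vtx_lt _ _ his, hb]
        simp
      have hpb := pair_bound hlam p (fun y => est y i) ((measurable_pi_apply i).comp hest) i
        (vtx s (Real.sqrt lam) (Function.update τ i (!τ i))) (vtx s (Real.sqrt lam) τ)
        h1 h2 (fun j hj => (hne j hj).symm)
      rw [add_comm]
      simp only [h1, h2, sub_neg_eq_add]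
      exact hpb
    · -- τ i = true
      have h1 : vtx s (Real.sqrt lam) τ i = Real.sqrt lam := by
        rw [vtx_lt _ _ his, hb]
        simp
      have h2 : vtx s (Real.sqrt lam) (Function.update τ i (!τ i)) i = -Real.sqrt lam := by
        rw [vtx_lt _ _ his, Function.update_self, hb]
        simp
      have hpb := pair_bound hlam p (fun y => est y i) ((measurable_pi_apply i).comp hest) i
        (vtx s (Real.sqrt lam) τ) (vtx s (Real.sqrt lam) (Function.update τ i (!τ i)))
        h1 h2 (fun j hj => hne j hj)
      simp only [h1, h2, sub_neg_eq_add]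
      exact hpb
  set cr : (Fin p → Bool) → Fin p → ℝ≥0∞ :=
    fun τ i => ∫⁻ y, ENNReal.ofReal ((est y i - vtx s (Real.sqrt lam) τ i) ^ 2)
      ∂(Measure.pi fun j => gaussianReal (vtx s (Real.sqrt lam) τ j) lam.toNNReal) with hcr
  set risk : (Fin p → Bool) → ℝ≥0∞ :=
    fun τ => ∫⁻ y, ENNReal.ofReal (∑ i, (est y i - vtx s (Real.sqrt lam) τ i) ^ 2)
      ∂(Measure.pi fun j => gaussianReal (vtx s (Real.sqrt lam) τ j) lam.toNNReal) with hrisk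
  have hcard : (Finset.univ : Finset (Fin p → Bool)).card = 2 ^ p := by
    simp [Finset.card_univ]
  have hflip : ∀ i : Fin p,
      ∑ τ : Fin p → Bool, cr (Function.update τ i (!τ i)) i = ∑ τ : Fin p → Bool, cr τ i := by
    intro i
    have hinv : Function.Involutive (fun τ : Fin p → Bool => Function.update τ i (!τ i)) := by
      intro τ
      ext j
      rcases eq_or_ne j i with rfl | hj
      · simp
      · simp [Function.update_of_ne hj]
    exact Fintype.sum_bijective _ hinv.bijective _ _ (fun τ => rfl)
  have hsum_i : ∀ i ∈ S, (2 ^ p : ℝ≥0∞) *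
      (ENNReal.ofReal (2 * lam) * ENNReal.ofReal (stdNormalCDF (-1)))
        ≤ 2 * ∑ τ : Fin p → Bool, cr τ i := by
    intro i hi
    have hsplit : 2 * ∑ τ : Fin p → Bool, cr τ i
        = ∑ τ : Fin p → Bool, (cr τ i + cr (Function.update τ i (!τ i)) i) := by
      rw [Finset.sum_add_distrib, hflip i, two_mul]
    rw [hsplit]
    calc (2 ^ p : ℝ≥0∞) * (ENNReal.ofReal (2 * lam) * ENNReal.ofReal (stdNormalCDF (-1)))
        = ∑ _τ : Fin p → Bool,
            (ENNReal.ofReal (2 * lam) * ENNReal.ofReal (stdNormalCDF (-1))) := by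
          rw [Finset.sum_const, hcard, nsmul_eq_mul]
          push_cast
          ring
      _ ≤ ∑ τ : Fin p → Bool, (cr τ i + cr (Function.update τ i (!τ i)) i) :=
          Finset.sum_le_sum fun τ _ => hpair i hi τ
  set T := ⨆ (θ : Fin p → ℝ) (_ : θ ∈ orderedSparseClass p s R),
      ∫⁻ y, ENNReal.ofReal (∑ i, (est y i - θ i) ^ 2)
        ∂(Measure.pi fun i => gaussianReal (θ i) lam.toNNReal) with hT
  have hmain : (s : ℝ≥0∞) * ((2 ^ p : ℝ≥0∞) *
        (ENNReal.ofReal (2 * lam) * ENNReal.ofReal (stdNormalCDF (-1))))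
      ≤ (2 * 2 ^ p) * T := by
    calc (s : ℝ≥0∞) * ((2 ^ p : ℝ≥0∞) *
          (ENNReal.ofReal (2 * lam) * ENNReal.ofReal (stdNormalCDF (-1))))
        = ∑ _i ∈ S, ((2 ^ p : ℝ≥0∞) *
            (ENNReal.ofReal (2 * lam) * ENNReal.ofReal (stdNormalCDF (-1)))) := by
          rw [Finset.sum_const, hScard, nsmul_eq_mul]
      _ ≤ ∑ i ∈ S, 2 * ∑ τ : Fin p → Bool, cr τ i := Finset.sum_le_sum hsum_i
      _ = 2 * ∑ τ : Fin p → Bool, ∑ i ∈ S, cr τ i := by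
          rw [← Finset.mul_sum, Finset.sum_comm]
      _ ≤ 2 * ∑ τ : Fin p → Bool, risk τ :=
          mul_le_mul_right (Finset.sum_le_sum fun τ _ => hstep1 τ) 2
      _ ≤ 2 * ∑ _τ : Fin p → Bool, T :=
          mul_le_mul_right (Finset.sum_le_sum fun τ _ => hriskT τ) 2
      _ = (2 * 2 ^ p) * T := by
          rw [Finset.sum_const, hcard, nsmul_eq_mul]
          push_cast
          ring
  have h2p0 : ((2 : ℝ≥0∞) * 2 ^ p) ≠ 0 := by
    simp
  have h2pt : ((2 : ℝ≥0∞) * 2 ^ p) ≠ ⊤ :=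
    ENNReal.mul_ne_top (by norm_num) (ENNReal.pow_ne_top (by norm_num))
  refine (ENNReal.mul_le_mul_iff_right h2p0 h2pt).1 (le_trans ?_ hmain)
  have hkey : 2 * ENNReal.ofReal (stdNormalCDF (-1) / 2 * (s : ℝ) * lam)
      ≤ (s : ℝ≥0∞) * (ENNReal.ofReal (2 * lam) * ENNReal.ofReal (stdNormalCDF (-1))) := by
    have e1 : 2 * ENNReal.ofReal (stdNormalCDF (-1) / 2 * (s : ℝ) * lam)
        = ENNReal.ofReal (2 * (stdNormalCDF (-1) / 2 * (s : ℝ) * lam)) := by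
      rw [ENNReal.ofReal_mul (by norm_num : (0:ℝ) ≤ 2), ENNReal.ofReal_ofNat]
    have e2 : (s : ℝ≥0∞) * (ENNReal.ofReal (2 * lam) * ENNReal.ofReal (stdNormalCDF (-1)))
        = ENNReal.ofReal ((s : ℝ) * (2 * lam * stdNormalCDF (-1))) := by
      rw [← ENNReal.ofReal_mul (by positivity : (0:ℝ) ≤ 2 * lam),
        ← ENNReal.ofReal_natCast s,
        ← ENNReal.ofReal_mul (by positivity : (0:ℝ) ≤ (s : ℝ))]
    rw [e1, e2]
    refine ENNReal.ofReal_le_ofReal ?_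
    have hs0 : (0 : ℝ) ≤ (s : ℝ) := Nat.cast_nonneg s
    nlinarith [mul_nonneg (mul_nonneg hs0 hlam.le) hΦ]
  calc (2 * 2 ^ p) * ENNReal.ofReal (stdNormalCDF (-1) / 2 * (s : ℝ) * lam)
      = 2 ^ p * (2 * ENNReal.ofReal (stdNormalCDF (-1) / 2 * (s : ℝ) * lam)) := by ring
    _ ≤ 2 ^ p * ((s : ℝ≥0∞) *
          (ENNReal.ofReal (2 * lam) * ENNReal.ofReal (stdNormalCDF (-1)))) :=
        mul_le_mul_right hkey _
    _ = (s : ℝ≥0∞) * (2 ^ p *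
          (ENNReal.ofReal (2 * lam) * ENNReal.ofReal (stdNormalCDF (-1)))) := by ring
end
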